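/- If f : [0,∞) → ℝ is a bounded measurable function, then liminf_{b→∞} (1/b) ∫_0^b f(x) dx ≥ ∫_0^1 liminf_{N→∞} (1/N) ∑_{n=0}^{N-1} f(t+n) dt, and limsup_{b→∞} (1/b) ∫_0^b f(x) dx ≤ ∫_0^1 limsup_{N→∞} (1/N) ∑_{n=0}^{N-1} f(t+n) dt. -/

import Mathlib

open MeasureTheory Filter Topology

-- integrability
lemma myInt (f : ℝ → ℝ) (hmeas : Measurable f) (M : ℝ) (hbd : ∀ x, |f x| ≤ M)
    (a b : ℝ) : IntegrableOn f (Set.Icc a b) := by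
  apply Measure.integrableOn_of_bounded (M := M) measure_Icc_lt_top.ne
    hmeas.aestronglyMeasurable
  exact ae_of_all _ fun x => by simpa using hbd x

-- step B
lemma myId (f : ℝ → ℝ) (hmeas : Measurable f) (M : ℝ) (hbd : ∀ x, |f x| ≤ M) (N : ℕ) :
    ∫ x in Set.Icc (0:ℝ) (N:ℝ), f x
      = ∑ n ∈ Finset.range N, ∫ t in Set.Icc (0:ℝ) 1, f (t + n) := by
  have hii : ∀ a b : ℝ, IntervalIntegrable f volume a b := fun a b =>
    (myInt f hmeas M hbd _ _).intervalIntegrable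
  have h1 : ∀ n : ℕ, ∫ t in Set.Icc (0:ℝ) 1, f (t + n) = ∫ x in (n:ℝ)..((n:ℝ)+1), f x := by
    intro n
    rw [integral_Icc_eq_integral_Ioc, ← intervalIntegral.integral_of_le zero_le_one,
      intervalIntegral.integral_comp_add_right]
    norm_num [add_comm]
  have h2 : ∑ n ∈ Finset.range N, ∫ x in ((n:ℕ):ℝ)..((n+1:ℕ):ℝ), f x
      = ∫ x in ((0:ℕ):ℝ)..((N:ℕ):ℝ), f x :=
    intervalIntegral.sum_integral_adjacent_intervals (fun i _ => hii _ _)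
  rw [integral_Icc_eq_integral_Ioc, ← intervalIntegral.integral_of_le (by positivity)]
  rw [Finset.sum_congr rfl (fun n _ => h1 n)]
  push_cast at h2
  rw [h2]

lemma myFatou (g : ℕ → ℝ → ℝ) (hg : ∀ N, Measurable (g N)) (M : ℝ) (hM : 0 ≤ M)
    (hb : ∀ N t, |g N t| ≤ M) :
    ∫ t in Set.Icc (0:ℝ) 1, liminf (fun N => g N t) atTop
      ≤ liminf (fun N => ∫ t in Set.Icc (0:ℝ) 1, g N t) atTop := by
  set μ := volume.restrict (Set.Icc (0:ℝ) 1) with hμ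
  have hμuniv : μ Set.univ = 1 := by
    simp [hμ, Real.volume_Icc]
  have hfin : IsFiniteMeasure μ := ⟨by simp [hμuniv]⟩
  -- boundedness facts
  have hbl : ∀ N t, -M ≤ g N t := fun N t => neg_le_of_abs_le (hb N t)
  have hbu : ∀ N t, g N t ≤ M := fun N t => le_of_abs_le (hb N t)
  have cobdd : ∀ t, IsCoboundedUnder (· ≥ ·) atTop (fun N => g N t) := fun t =>
    (isBoundedUnder_of ⟨M, fun N => hbu N t⟩).isCoboundedUnder_ge
  have bddbelow : ∀ t, IsBoundedUnder (· ≥ ·) atTop (fun N => g N t) := fun t =>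
    isBoundedUnder_of ⟨-M, fun N => hbl N t⟩
  -- liminf bounds
  have hliml : ∀ t, -M ≤ liminf (fun N => g N t) atTop := fun t =>
    le_liminf_of_le (cobdd t) (Eventually.of_forall fun N => hbl N t)
  have hlimu : ∀ t, liminf (fun N => g N t) atTop ≤ M := fun t =>
    liminf_le_of_le (bddbelow t) fun b hbb => by
      obtain ⟨N, hN⟩ := hbb.exists
      exact hN.trans (hbu N t)
  haveI := hfin
  -- measurability & integrability
  have hmliminf : Measurable fun t => liminf (fun N => g N t) atTop := .liminf hg
  have hint : ∀ N, Integrable (g N) μ := fun N =>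
    Integrable.mono' (integrable_const M) (hg N).aestronglyMeasurable
      (ae_of_all _ fun t => by simpa using hb N t)
  have hintL : Integrable (fun t => liminf (fun N => g N t) atTop) μ :=
    Integrable.mono' (integrable_const M) hmliminf.aestronglyMeasurable
      (ae_of_all _ fun t => abs_le.2 ⟨hliml t, hlimu t⟩)
  -- pointwise commuting of ofReal (· + M) with liminf
  have mono : Monotone (fun x : ℝ => ENNReal.ofReal (x + M)) := fun a b h =>
    ENNReal.ofReal_le_ofReal (by linarith)
  have hpt : ∀ t, ENNReal.ofReal (liminf (fun N => g N t) atTop + M)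
      = liminf (fun N => ENNReal.ofReal (g N t + M)) atTop := by
    intro t
    have cont : ContinuousAt (fun x : ℝ => ENNReal.ofReal (x + M))
        (liminf (fun N => g N t) atTop) :=
      (ENNReal.continuous_ofReal.comp (continuous_add_right M)).continuousAt
    exact mono.map_liminf_of_continuousAt (fun N => g N t) cont (cobdd t) (bddbelow t)
  -- Fatou for lintegral
  have key : ∫⁻ t, ENNReal.ofReal (liminf (fun N => g N t) atTop + M) ∂μ
      ≤ liminf (fun N => ∫⁻ t, ENNReal.ofReal (g N t + M) ∂μ) atTop := by
    calc ∫⁻ t, ENNReal.ofReal (liminf (fun N => g N t) atTop + M) ∂μ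
        = ∫⁻ t, liminf (fun N => ENNReal.ofReal (g N t + M)) atTop ∂μ := by
          exact lintegral_congr fun t => hpt t
      _ ≤ liminf (fun N => ∫⁻ t, ENNReal.ofReal (g N t + M) ∂μ) atTop :=
          lintegral_liminf_le fun N => ((hg N).add measurable_const).ennreal_ofReal
  -- rewrite lintegrals as ofReal of integrals
  have h1 : ∀ N, ∫⁻ t, ENNReal.ofReal (g N t + M) ∂μ
      = ENNReal.ofReal ((∫ t, g N t ∂μ) + M) := by
    intro N
    have hI : Integrable (fun t => g N t + M) μ := (hint N).add (integrable_const M)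
    have hnn : 0 ≤ᵐ[μ] (fun t => g N t + M) :=
      ae_of_all _ fun t => (by linarith [hbl N t] : (0:ℝ) ≤ g N t + M)
    rw [← ofReal_integral_eq_lintegral_ofReal hI hnn,
      integral_add (hint N) (integrable_const M), integral_const]
    simp [Measure.real, hμuniv]
  have h2 : ∫⁻ t, ENNReal.ofReal (liminf (fun N => g N t) atTop + M) ∂μ
      = ENNReal.ofReal ((∫ t, liminf (fun N => g N t) atTop ∂μ) + M) := by
    have hI : Integrable (fun t => liminf (fun N => g N t) atTop + M) μ :=
      hintL.add (integrable_const M)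
    have hnn : 0 ≤ᵐ[μ] (fun t => liminf (fun N => g N t) atTop + M) :=
      ae_of_all _ fun t => (by linarith [hliml t] : (0:ℝ) ≤ liminf (fun N => g N t) atTop + M)
    rw [← ofReal_integral_eq_lintegral_ofReal hI hnn,
      integral_add hintL (integrable_const M), integral_const]
    simp [Measure.real, hμuniv]
  rw [h2] at key
  simp_rw [h1] at key
  -- bounds on the sequence of integrals
  have hIu : ∀ N, ∫ t, g N t ∂μ ≤ M := by
    intro N
    calc ∫ t, g N t ∂μ ≤ ∫ _, M ∂μ :=
          integral_mono (hint N) (integrable_const M) fun t => hbu N t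
      _ = M := by simp [Measure.real, hμuniv]
  have hIl : ∀ N, -M ≤ ∫ t, g N t ∂μ := by
    intro N
    calc (-M : ℝ) = ∫ _, (-M : ℝ) ∂μ := by simp [Measure.real, hμuniv]
      _ ≤ ∫ t, g N t ∂μ :=
          integral_mono (integrable_const (-M)) (hint N) fun t => hbl N t
  have cobddI : IsCoboundedUnder (· ≥ ·) atTop (fun N => ∫ t, g N t ∂μ) :=
    (isBoundedUnder_of ⟨M, fun N => hIu N⟩).isCoboundedUnder_ge
  have bddI : IsBoundedUnder (· ≥ ·) atTop (fun N => ∫ t, g N t ∂μ) :=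
    isBoundedUnder_of ⟨-M, fun N => hIl N⟩
  have hmap : liminf (fun N => ENNReal.ofReal ((∫ t, g N t ∂μ) + M)) atTop
      = ENNReal.ofReal (liminf (fun N => ∫ t, g N t ∂μ) atTop + M) := by
    have cont : ContinuousAt (fun x : ℝ => ENNReal.ofReal (x + M))
        (liminf (fun N => ∫ t, g N t ∂μ) atTop) :=
      (ENNReal.continuous_ofReal.comp (continuous_add_right M)).continuousAt
    exact (mono.map_liminf_of_continuousAt (fun N => ∫ t, g N t ∂μ) cont cobddI bddI).symm
  rw [hmap] at key
  have hLl : -M ≤ liminf (fun N => ∫ t, g N t ∂μ) atTop :=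
    le_liminf_of_le cobddI (Eventually.of_forall fun N => hIl N)
  have := (ENNReal.ofReal_le_ofReal_iff (by linarith)).1 key
  linarith


lemma myGbd (f : ℝ → ℝ) (M : ℝ) (hbd : ∀ x, |f x| ≤ M) (N : ℕ) (t : ℝ) :
    |(N:ℝ)⁻¹ * ∑ n ∈ Finset.range N, f (t + n)| ≤ M := by
  have hM : 0 ≤ M := (abs_nonneg _).trans (hbd 0)
  rcases Nat.eq_zero_or_pos N with h0 | hpos
  · simp [h0, hM]
  · have hNpos : (0:ℝ) < N := by exact_mod_cast hpos
    have hsum : |∑ n ∈ Finset.range N, f (t + n)| ≤ N * M := by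
      calc |∑ n ∈ Finset.range N, f (t + n)| ≤ ∑ n ∈ Finset.range N, |f (t + n)| :=
            Finset.abs_sum_le_sum_abs _ _
        _ ≤ ∑ _n ∈ Finset.range N, M := Finset.sum_le_sum fun n _ => hbd _
        _ = N * M := by simp [Finset.sum_const, mul_comm]
    rw [abs_mul, abs_inv, abs_of_pos hNpos]
    calc (N:ℝ)⁻¹ * |∑ n ∈ Finset.range N, f (t + n)| ≤ (N:ℝ)⁻¹ * (N * M) :=
          mul_le_mul_of_nonneg_left hsum (by positivity)
      _ = M := by field_simp

lemma myAbd (f : ℝ → ℝ) (hmeas : Measurable f) (M : ℝ) (hbd : ∀ x, |f x| ≤ M)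
    (b : ℝ) (hb : 1 ≤ b) : |b⁻¹ * ∫ x in Set.Icc (0:ℝ) b, f x| ≤ M := by
  have hbpos : (0:ℝ) < b := by linarith
  have hnorm : ‖∫ x in Set.Icc (0:ℝ) b, f x‖ ≤ M * (volume (Set.Icc (0:ℝ) b)).toReal :=
    norm_setIntegral_le_of_norm_le_const_ae measure_Icc_lt_top
      (ae_of_all _ fun x => by simpa using hbd x)
  rw [Real.volume_Icc] at hnorm
  have hvol : (ENNReal.ofReal (b - 0)).toReal = b := by
    rw [ENNReal.toReal_ofReal (by linarith)]; ring
  rw [hvol] at hnorm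
  rw [abs_mul, abs_inv, abs_of_pos hbpos]
  calc b⁻¹ * |∫ x in Set.Icc (0:ℝ) b, f x| ≤ b⁻¹ * (M * b) :=
        mul_le_mul_of_nonneg_left hnorm (by positivity)
    _ = M := by field_simp

lemma myNegLiminf {α : Type*} {F : Filter α} [F.NeBot] (u : α → ℝ)
    (h1 : IsCoboundedUnder (· ≤ ·) F u) (h2 : IsBoundedUnder (· ≤ ·) F u) :
    liminf (fun x => -(u x)) F = -limsup u F := by
  have h := Antitone.map_limsup_of_continuousAt (F := F) (f := fun x : ℝ => -x)
    (fun a b hab => neg_le_neg hab) u continuous_neg.continuousAt h2 h1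
  exact h.symm

lemma myKey (f : ℝ → ℝ) (hmeas : Measurable f) (M : ℝ) (hbd : ∀ x, |f x| ≤ M) :
    ∫ t in Set.Icc (0:ℝ) 1,
        liminf (fun N : ℕ => (N : ℝ)⁻¹ * ∑ n ∈ Finset.range N, f (t + n)) atTop
      ≤ liminf (fun b : ℝ => b⁻¹ * ∫ x in Set.Icc (0:ℝ) b, f x) atTop := by
  have hM : 0 ≤ M := (abs_nonneg _).trans (hbd 0)
  set A : ℝ → ℝ := fun b => b⁻¹ * ∫ x in Set.Icc (0:ℝ) b, f x with hA
  set g : ℕ → ℝ → ℝ := fun N t => (N:ℝ)⁻¹ * ∑ n ∈ Finset.range N, f (t + n) with hgdef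
  have hg : ∀ N, Measurable (g N) := by
    intro N
    apply Measurable.const_mul
    exact Finset.measurable_sum _ fun n _ => hmeas.comp (measurable_add_const (n:ℝ))
  have hgb : ∀ N t, |g N t| ≤ M := fun N t => myGbd f M hbd N t
  -- integrability of translates
  have hInt1 : ∀ n : ℕ, IntegrableOn (fun t => f (t + n)) (Set.Icc (0:ℝ) 1) := by
    intro n
    apply Measure.integrableOn_of_bounded (M := M) measure_Icc_lt_top.ne
      (hmeas.comp (measurable_add_const (n:ℝ))).aestronglyMeasurable
    exact ae_of_all _ fun x => by simpa using hbd _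
  -- ∫ g N over [0,1] = A N
  have hgint : ∀ N : ℕ, ∫ t in Set.Icc (0:ℝ) 1, g N t = A (N:ℝ) := by
    intro N
    rw [hA]
    simp only
    rw [myId f hmeas M hbd N, hgdef]
    simp only
    rw [integral_const_mul, integral_finset_sum _ fun n _ => hInt1 n]
  have hFatou := myFatou g hg M hM hgb
  simp_rw [hgint] at hFatou
  -- hFatou : ∫ liminf g ≤ liminf (fun N : ℕ => A N)
  set I := ∫ t in Set.Icc (0:ℝ) 1, liminf (fun N : ℕ => g N t) atTop with hI
  -- bound on A
  have hAbd : ∀ b : ℝ, 1 ≤ b → |A b| ≤ M := fun b hb => myAbd f hmeas M hbd b hb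
  -- interval integral form
  have hii : ∀ a b : ℝ, IntervalIntegrable f volume a b := fun a b =>
    (myInt f hmeas M hbd _ _).intervalIntegrable
  have hAicc : ∀ b : ℝ, 0 ≤ b → ∫ x in Set.Icc (0:ℝ) b, f x = ∫ x in (0:ℝ)..b, f x := by
    intro b hb
    rw [intervalIntegral.integral_of_le hb, integral_Icc_eq_integral_Ioc]
  -- error estimate
  have hErr : ∀ b : ℝ, 1 ≤ b → |A b - A (⌊b⌋₊ : ℝ)| ≤ 2 * M / b := by
    intro b hb
    set N := ⌊b⌋₊ with hNdef
    have hbpos : (0:ℝ) < b := by linarith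
    have hN1 : 1 ≤ N := Nat.le_floor (by exact_mod_cast hb)
    have hNpos : (0:ℝ) < N := by exact_mod_cast hN1
    have hNb : (N:ℝ) ≤ b := Nat.floor_le (by linarith)
    have hbN : b - N ≤ 1 := by
      have := Nat.lt_floor_add_one b; linarith
    have hsplit : ∫ x in (0:ℝ)..b, f x
        = (∫ x in (0:ℝ)..(N:ℝ), f x) + ∫ x in (N:ℝ)..b, f x :=
      (intervalIntegral.integral_add_adjacent_intervals (hii _ _) (hii _ _)).symm
    have hR : |∫ x in (N:ℝ)..b, f x| ≤ M * (b - N) := by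
      have := intervalIntegral.norm_integral_le_of_norm_le_const
        (f := f) (C := M) (a := (N:ℝ)) (b := b) (fun x _ => by simpa using hbd x)
      rwa [Real.norm_eq_abs, abs_of_nonneg (by linarith : (0:ℝ) ≤ b - N)] at this
    have hIN : ∫ x in (0:ℝ)..(N:ℝ), f x = N * A (N:ℝ) := by
      rw [hA]; simp only; rw [hAicc _ hNpos.le]; field_simp
    have hAb : A b = b⁻¹ * ((N * A (N:ℝ)) + ∫ x in (N:ℝ)..b, f x) := by
      rw [hA]; simp only; rw [hAicc _ hbpos.le, hsplit, hIN]
    have hAN : |A (N:ℝ)| ≤ M := hAbd _ (by exact_mod_cast hN1)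
    set R := ∫ x in (N:ℝ)..b, f x
    have hdiff : A b - A (N:ℝ) = ((N:ℝ)/b - 1) * A (N:ℝ) + R / b := by
      rw [hAb]; field_simp; ring
    rw [hdiff]
    have hq : |(N:ℝ)/b - 1| = (b - N)/b := by
      rw [abs_of_nonpos (by
        have : (N:ℝ)/b ≤ 1 := (div_le_one hbpos).2 hNb
        linarith)]
      field_simp
      ring
    have h1 : |((N:ℝ)/b - 1) * A (N:ℝ)| ≤ (b - N)/b * M := by
      rw [abs_mul, hq]
      exact mul_le_mul_of_nonneg_left hAN (div_nonneg (by linarith) hbpos.le)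
    have h2 : |R / b| ≤ M * (b - N) / b := by
      rw [abs_div, abs_of_pos hbpos]
      gcongr
    calc |((N:ℝ)/b - 1) * A (N:ℝ) + R / b| ≤ _ + _ := abs_add_le _ _
      _ ≤ (b - N)/b * M + M * (b - N) / b := add_le_add h1 h2
      _ = 2 * (M * (b - N)) / b := by ring
      _ ≤ 2 * M / b := by
          rw [div_le_div_iff₀ hbpos hbpos]
          nlinarith [mul_nonneg (mul_nonneg hM (by linarith : (0:ℝ) ≤ 1 - (b - (N:ℝ)))) hbpos.le]
  -- boundedness of A
  have hbddA : IsBoundedUnder (· ≤ ·) atTop A :=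
    ⟨M, eventually_map.2 (by
      filter_upwards [eventually_ge_atTop (1:ℝ)] with b hb
      exact le_of_abs_le (hAbd b hb))⟩
  have hcobddA : IsCoboundedUnder (· ≥ ·) atTop A := hbddA.isCoboundedUnder_ge
  have hbddAN : IsBoundedUnder (· ≤ ·) atTop (fun N : ℕ => A (N:ℝ)) :=
    ⟨M, eventually_map.2 (by
      filter_upwards [eventually_ge_atTop 1] with N hN
      exact le_of_abs_le (hAbd _ (by exact_mod_cast hN)))⟩
  -- conclude
  show I ≤ liminf A atTop
  refine le_of_forall_pos_le_add ?_
  intro ε hε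
  have hlt : I - ε/2 < liminf (fun N : ℕ => A (N:ℝ)) atTop :=
    lt_of_lt_of_le (by linarith) hFatou
  have hbddANlow : IsBoundedUnder (· ≥ ·) atTop (fun N : ℕ => A (N:ℝ)) :=
    ⟨-M, eventually_map.2 (by
      filter_upwards [eventually_ge_atTop 1] with N hN
      exact neg_le_of_abs_le (hAbd _ (by exact_mod_cast hN)))⟩
  have hev : ∀ᶠ N : ℕ in atTop, I - ε/2 < A (N:ℝ) :=
    eventually_lt_of_lt_liminf hlt hbddANlow
  obtain ⟨N₀, hN₀⟩ := eventually_atTop.1 hev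
  have hevb : ∀ᶠ b : ℝ in atTop, I - ε ≤ A b := by
    filter_upwards [eventually_ge_atTop (max ((N₀:ℝ) + 1) (max 1 (4*M/ε + 1)))] with b hb
    have hb0 : (N₀:ℝ) + 1 ≤ b := le_trans (le_max_left _ _) hb
    have hb1 : (1:ℝ) ≤ b := le_trans ((le_max_left _ _).trans (le_max_right _ _)) hb
    have hb2 : 4*M/ε + 1 ≤ b := le_trans ((le_max_right _ _).trans (le_max_right _ _)) hb
    have hbpos : (0:ℝ) < b := by linarith
    have hNN₀ : N₀ ≤ ⌊b⌋₊ := Nat.le_floor (by linarith)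
    have h1 := hN₀ _ hNN₀
    have h2 := abs_le.1 (hErr b hb1)
    have h3 : 2*M/b ≤ ε/2 := by
      rw [div_le_iff₀ hbpos]
      have h4 : 4*M/ε ≤ b - 1 := by linarith
      rw [div_le_iff₀ hε] at h4
      nlinarith
    linarith [h2.1]
  have := le_liminf_of_le hcobddA hevb
  linarith

theorem stmt4 (f : ℝ → ℝ) (hmeas : Measurable f)
    (M : ℝ) (hbd : ∀ x, |f x| ≤ M) :
    (liminf (fun b : ℝ => b⁻¹ * ∫ x in Set.Icc (0:ℝ) b, f x) atTop
      ≥ ∫ t in Set.Icc (0:ℝ) 1,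
          liminf (fun N : ℕ => (N : ℝ)⁻¹ * ∑ n ∈ Finset.range N, f (t + n)) atTop)
    ∧
    (limsup (fun b : ℝ => b⁻¹ * ∫ x in Set.Icc (0:ℝ) b, f x) atTop
      ≤ ∫ t in Set.Icc (0:ℝ) 1,
          limsup (fun N : ℕ => (N : ℝ)⁻¹ * ∑ n ∈ Finset.range N, f (t + n)) atTop) := by
  constructor
  · exact myKey f hmeas M hbd
  · have h2 := myKey (fun x => -f x) hmeas.neg M (fun x => by simpa using hbd x)
    -- rewrite RHS (the liminf over ℝ)
    have hL : (fun b : ℝ => b⁻¹ * ∫ x in Set.Icc (0:ℝ) b, (fun x => -f x) x)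
        = fun b : ℝ => -(b⁻¹ * ∫ x in Set.Icc (0:ℝ) b, f x) := by
      funext b
      rw [integral_neg]; ring
    rw [hL] at h2
    have hAbd := myAbd f hmeas M hbd
    have hbddA : IsBoundedUnder (· ≤ ·) atTop (fun b : ℝ => b⁻¹ * ∫ x in Set.Icc (0:ℝ) b, f x) :=
      ⟨M, eventually_map.2 (by
        filter_upwards [eventually_ge_atTop (1:ℝ)] with b hb
        exact le_of_abs_le (hAbd b hb))⟩
    have hbddAlow : IsBoundedUnder (· ≥ ·) atTop (fun b : ℝ => b⁻¹ * ∫ x in Set.Icc (0:ℝ) b, f x) :=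
      ⟨-M, eventually_map.2 (by
        filter_upwards [eventually_ge_atTop (1:ℝ)] with b hb
        exact neg_le_of_abs_le (hAbd b hb))⟩
    rw [myNegLiminf _ hbddAlow.isCoboundedUnder_le hbddA] at h2
    -- rewrite LHS (the integrand)
    have hpt : ∀ t : ℝ, liminf (fun N : ℕ => (N:ℝ)⁻¹ * ∑ n ∈ Finset.range N, (fun x => -f x) (t + n)) atTop
        = -limsup (fun N : ℕ => (N:ℝ)⁻¹ * ∑ n ∈ Finset.range N, f (t + n)) atTop := by
      intro t
      have heq : (fun N : ℕ => (N:ℝ)⁻¹ * ∑ n ∈ Finset.range N, (fun x => -f x) (t + n))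
          = fun N : ℕ => -((N:ℝ)⁻¹ * ∑ n ∈ Finset.range N, f (t + n)) := by
        funext N
        rw [Finset.sum_neg_distrib]; ring
      rw [heq]
      have hgb := fun N => myGbd f M hbd N t
      exact myNegLiminf _
        (IsBoundedUnder.isCoboundedUnder_le ⟨-M, eventually_map.2
          (Eventually.of_forall fun N => neg_le_of_abs_le (hgb N))⟩)
        ⟨M, eventually_map.2 (Eventually.of_forall fun N => le_of_abs_le (hgb N))⟩
    simp_rw [hpt] at h2
    rw [integral_neg] at h2
    linarith
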